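/- arXiv:1801.06570 — 3 statements merged into one kernel-verified Lean document; each statement's English description precedes it below -/
import Mathlib

section
/- Let {A_n} be a sequence of n×n symmetric matrices with nonnegative entries and zeros on the diagonal satisfying (BD) and (MF), fix (β, B) ∈ Θ, and let X be an observation from P_{n,β,B}. With b_i(x) := tanh(β m_i(x) + B), one has limsup_{n→∞} (1/n) E[ ( Σ_{i=1}^n (X_i − b_i(X)) )² ] < ∞, where E denotes expectation under P_{n,β,B}. -/
open Filter

noncomputable section

/-- Spin configuration in `{-1,1}^n` encoded by a Boolean vector. -/
def spinVec (n : ℕ) (σ : Fin n → Bool) : Fin n → ℝ := fun i => if σ i then 1 else -1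

/-- Local field `m_i(x) = ∑_j A i j * x j`. -/
def mloc {n : ℕ} (A : Matrix (Fin n) (Fin n) ℝ) (x : Fin n → ℝ) (i : Fin n) : ℝ :=
  ∑ j, A i j * x j

/-- Average local field `m̄(x)`. -/
def mbar {n : ℕ} (A : Matrix (Fin n) (Fin n) ℝ) (x : Fin n → ℝ) : ℝ :=
  (1 / (n : ℝ)) * ∑ i, mloc A x i

/-- `T_n(x) = (1/n) ∑_i (m_i(x) - m̄(x))²`. -/
def Tstat {n : ℕ} (A : Matrix (Fin n) (Fin n) ℝ) (x : Fin n → ℝ) : ℝ :=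
  (1 / (n : ℝ)) * ∑ i, (mloc A x i - mbar A x) ^ 2

/-- Unnormalized Ising weight `exp((β/2) xᵀAx + B ∑ x_i)`. -/
def isingWt {n : ℕ} (A : Matrix (Fin n) (Fin n) ℝ) (β B : ℝ) (x : Fin n → ℝ) : ℝ :=
  Real.exp (β / 2 * ∑ i, ∑ j, A i j * x i * x j + B * ∑ i, x i)

/-- Probability of the event `E` under the Ising measure `P_{n,β,B}`. -/
def isingProb {n : ℕ} (A : Matrix (Fin n) (Fin n) ℝ) (β B : ℝ) (E : Set (Fin n → ℝ)) : ℝ :=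
  (∑ σ : Fin n → Bool, E.indicator (isingWt A β B) (spinVec n σ)) /
    (∑ σ : Fin n → Bool, isingWt A β B (spinVec n σ))

/-- Expectation of `f` under the Ising measure `P_{n,β,B}`. -/
def isingExp {n : ℕ} (A : Matrix (Fin n) (Fin n) ℝ) (β B : ℝ) (f : (Fin n → ℝ) → ℝ) : ℝ :=
  (∑ σ : Fin n → Bool, f (spinVec n σ) * isingWt A β B (spinVec n σ)) /
    (∑ σ : Fin n → Bool, isingWt A β B (spinVec n σ))

/-- Pseudo-likelihood equation `Q_n(β,B|x)`. -/
def Qfun {n : ℕ} (A : Matrix (Fin n) (Fin n) ℝ) (β B : ℝ) (x : Fin n → ℝ) : ℝ :=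
  ∑ i, mloc A x i * (x i - Real.tanh (β * mloc A x i + B))

/-- Pseudo-likelihood equation `R_n(β,B|x)`. -/
def Rfun {n : ℕ} (A : Matrix (Fin n) (Fin n) ℝ) (β B : ℝ) (x : Fin n → ℝ) : ℝ :=
  ∑ i, (x i - Real.tanh (β * mloc A x i + B))

/-- `b_i(x) = tanh(β m_i(x) + B)`. -/
def bvec {n : ℕ} (A : Matrix (Fin n) (Fin n) ℝ) (β B : ℝ) (x : Fin n → ℝ) : Fin n → ℝ :=
  fun i => Real.tanh (β * mloc A x i + B)

/-- `f_n(y) = (β/2) yᵀAy + B ∑ y_i`. -/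
def fN {n : ℕ} (A : Matrix (Fin n) (Fin n) ℝ) (β B : ℝ) (y : Fin n → ℝ) : ℝ :=
  β / 2 * ∑ i, ∑ j, A i j * y i * y j + B * ∑ i, y i

/-- Entropy term `I(y)` (with `0 log 0 = 0`, as `Real.log 0 = 0`). -/
def entI {n : ℕ} (y : Fin n → ℝ) : ℝ :=
  ∑ i, ((1 + y i) / 2 * Real.log ((1 + y i) / 2) + (1 - y i) / 2 * Real.log ((1 - y i) / 2))

-- ### auxiliary lemmas

lemma tanh_hasDerivAt (t : ℝ) : HasDerivAt Real.tanh (1 / Real.cosh t ^ 2) t := by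
  have h1 : HasDerivAt (fun x => Real.sinh x / Real.cosh x)
      ((Real.cosh t * Real.cosh t - Real.sinh t * Real.sinh t) / Real.cosh t ^ 2) t :=
    (Real.hasDerivAt_sinh t).div (Real.hasDerivAt_cosh t) (Real.cosh_pos t).ne'
  have h2 : (fun x => Real.sinh x / Real.cosh x) = Real.tanh :=
    funext fun x => (Real.tanh_eq_sinh_div_cosh x).symm
  rw [h2] at h1
  have h3 : Real.cosh t * Real.cosh t - Real.sinh t * Real.sinh t = 1 := by
    nlinarith [Real.cosh_sq_sub_sinh_sq t]
  rwa [h3] at h1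

lemma tanh_lip (a b : ℝ) : |Real.tanh a - Real.tanh b| ≤ |a - b| := by
  have hlip : LipschitzWith 1 Real.tanh := by
    apply lipschitzWith_of_nnnorm_deriv_le (fun x => (tanh_hasDerivAt x).differentiableAt)
    intro x
    rw [(tanh_hasDerivAt x).deriv, ← NNReal.coe_le_coe]
    push_cast
    rw [Real.norm_eq_abs, abs_of_nonneg (by positivity)]
    rw [div_le_one (by positivity)]
    nlinarith [Real.one_le_cosh x]
  have := hlip.dist_le_mul a b
  simpa [Real.dist_eq] using this

lemma abs_tanh_le_one (t : ℝ) : |Real.tanh t| ≤ 1 := by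
  rw [Real.tanh_eq_sinh_div_cosh, abs_div, abs_of_pos (Real.cosh_pos t),
    div_le_one (Real.cosh_pos t)]
  rw [abs_le]
  constructor
  · nlinarith [Real.sinh_add_cosh t, Real.exp_pos t]
  · nlinarith [Real.cosh_sub_sinh t, Real.exp_pos (-t)]

lemma flip_identity (t s : ℝ) (hs : s = 1 ∨ s = -1) :
    (-s - Real.tanh t) * Real.exp (-(2 * s * t)) = -((s - Real.tanh t)) := by
  have h1 : Real.exp t * Real.exp (-t) = 1 := by
    rw [← Real.exp_add]; simp
  have hpos : 0 < Real.exp t + Real.exp (-t) := by positivity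
  have htanh : Real.tanh t = (Real.exp t - Real.exp (-t)) / (Real.exp t + Real.exp (-t)) := by
    rw [Real.tanh_eq_sinh_div_cosh, Real.sinh_eq, Real.cosh_eq]
    field_simp
  rcases hs with hs | hs <;> subst hs
  · have h2 : Real.exp (-(2 * (1:ℝ) * t)) = Real.exp (-t) * Real.exp (-t) := by
      rw [← Real.exp_add]; ring_nf
    rw [h2, htanh]
    field_simp
    nlinarith [h1]
  · have h2 : Real.exp (-(2 * (-1:ℝ) * t)) = Real.exp t * Real.exp t := by
      rw [← Real.exp_add]; ring_nf
    rw [h2, htanh]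
    field_simp
    nlinarith [h1]

-- ### structural lemmas

lemma spin_cases {n : ℕ} (σ : Fin n → Bool) (i : Fin n) :
    spinVec n σ i = 1 ∨ spinVec n σ i = -1 := by
  unfold spinVec; by_cases h : σ i <;> simp [h]

lemma abs_spin {n : ℕ} (σ : Fin n → Bool) (i : Fin n) : |spinVec n σ i| = 1 := by
  rcases spin_cases σ i with h | h <;> rw [h] <;> norm_num

lemma sum_update_mul {n : ℕ} (x : Fin n → ℝ) (i : Fin n) (v : ℝ) (g : Fin n → ℝ) :
    ∑ k, Function.update x i v k * g k = (∑ k, x k * g k) + (v - x i) * g i := by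
  have h : ∀ k ∈ Finset.univ, Function.update x i v k * g k
      = x k * g k + (if k = i then (v - x i) * g i else 0) := by
    intro k _
    rcases eq_or_ne k i with rfl | h
    · simp [Function.update_self]; ring
    · simp [Function.update_of_ne h, h]
  rw [Finset.sum_congr rfl h, Finset.sum_add_distrib, Finset.sum_ite_eq' Finset.univ i]
  simp

lemma sum_update {n : ℕ} (x : Fin n → ℝ) (i : Fin n) (v : ℝ) :
    ∑ k, Function.update x i v k = (∑ k, x k) + (v - x i) := by
  have := sum_update_mul x i v (fun _ => 1)
  simpa using this

lemma mloc_update {n : ℕ} (A : Matrix (Fin n) (Fin n) ℝ) (x : Fin n → ℝ) (i : Fin n) (v : ℝ)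
    (j : Fin n) :
    mloc A (Function.update x i v) j = mloc A x j + A j i * (v - x i) := by
  unfold mloc
  have h : ∀ k ∈ Finset.univ, A j k * Function.update x i v k
      = A j k * x k + (if k = i then A j i * (v - x i) else 0) := by
    intro k _
    rcases eq_or_ne k i with rfl | h
    · simp [Function.update_self]; ring
    · simp [Function.update_of_ne h, h]
  rw [Finset.sum_congr rfl h, Finset.sum_add_distrib, Finset.sum_ite_eq' Finset.univ i]
  simp

lemma quad_eq {n : ℕ} (A : Matrix (Fin n) (Fin n) ℝ) (x : Fin n → ℝ) :
    ∑ k, ∑ l, A k l * x k * x l = ∑ k, x k * mloc A x k := by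
  unfold mloc
  refine Finset.sum_congr rfl fun k _ => ?_
  rw [Finset.mul_sum]
  refine Finset.sum_congr rfl fun l _ => by ring

lemma fN_update {n : ℕ} (A : Matrix (Fin n) (Fin n) ℝ) (hsymm : A.IsSymm) (β B : ℝ)
    (x : Fin n → ℝ) (i : Fin n) (hdiag : A i i = 0) (v : ℝ) :
    fN A β B (Function.update x i v) = fN A β B x + (v - x i) * (β * mloc A x i + B) := by
  unfold fN
  rw [quad_eq, quad_eq]
  have h1 : ∑ k, Function.update x i v k * mloc A (Function.update x i v) k
      = (∑ k, Function.update x i v k * mloc A x k)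
        + (v - x i) * ∑ k, Function.update x i v k * A k i := by
    rw [Finset.mul_sum, ← Finset.sum_add_distrib]
    refine Finset.sum_congr rfl fun k _ => ?_
    rw [mloc_update]; ring
  have h2 : ∑ k, Function.update x i v k * mloc A x k
      = (∑ k, x k * mloc A x k) + (v - x i) * mloc A x i := sum_update_mul x i v _
  have h3 : ∑ k, Function.update x i v k * A k i = mloc A x i := by
    rw [sum_update_mul x i v (fun k => A k i), hdiag]
    unfold mloc
    rw [Finset.sum_congr rfl (fun k _ => ?_)]
    · ring
    · rw [hsymm.apply]; ring
  rw [h1, h2, h3, sum_update]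
  ring

lemma isingWt_update {n : ℕ} (A : Matrix (Fin n) (Fin n) ℝ) (hsymm : A.IsSymm) (β B : ℝ)
    (x : Fin n → ℝ) (i : Fin n) (hdiag : A i i = 0) (v : ℝ) :
    isingWt A β B (Function.update x i v)
      = isingWt A β B x * Real.exp ((v - x i) * (β * mloc A x i + B)) := by
  have h : ∀ y, isingWt A β B y = Real.exp (fN A β B y) := fun y => rfl
  rw [h, h, fN_update A hsymm β B x i hdiag, Real.exp_add]

lemma spin_flip {n : ℕ} (σ : Fin n → Bool) (i : Fin n) :
    spinVec n (Function.update σ i (!σ i))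
      = Function.update (spinVec n σ) i (-(spinVec n σ i)) := by
  funext j
  simp only [spinVec, Function.update_apply]
  rcases eq_or_ne j i with rfl | h
  · simp only [if_pos rfl]
    cases h : σ j <;> simp
  · simp [h]

lemma flip_invol {n : ℕ} (i : Fin n) :
    Function.Involutive (fun σ : Fin n → Bool => Function.update σ i (!σ i)) := by
  intro σ
  funext j
  rcases eq_or_ne j i with rfl | h
  · simp [Function.update_apply]
  · simp [Function.update_apply, h]

lemma main_bound {n : ℕ} (A : Matrix (Fin n) (Fin n) ℝ) (hsymm : A.IsSymm)
    (hnonneg : ∀ i j, 0 ≤ A i j) (hdiag : ∀ i, A i i = 0) (β B γ : ℝ) (hβ : 0 < β)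
    (hγ : ∀ i : Fin n, (∑ j, A i j) ≤ γ) :
    isingExp A β B (fun x => (∑ i, (x i - bvec A β B x i)) ^ 2) ≤ n * (2 + 2 * β * γ) := by
  classical
  have hwpos : ∀ σ : Fin n → Bool, 0 < isingWt A β B (spinVec n σ) := fun σ => Real.exp_pos _
  have hS : 0 < ∑ σ : Fin n → Bool, isingWt A β B (spinVec n σ) :=
    Finset.sum_pos (fun σ _ => hwpos σ) Finset.univ_nonempty
  rw [isingExp, div_le_iff₀ hS]
  set w : (Fin n → Bool) → ℝ := fun σ => isingWt A β B (spinVec n σ) with hw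
  set R : (Fin n → ℝ) → ℝ := fun x => ∑ i, (x i - bvec A β B x i) with hR
  have expand : ∑ σ : Fin n → Bool, (∑ i, (spinVec n σ i - bvec A β B (spinVec n σ) i)) ^ 2 * w σ
      = ∑ i : Fin n, ∑ σ : Fin n → Bool,
          (spinVec n σ i - bvec A β B (spinVec n σ) i) * (R (spinVec n σ) * w σ) := by
    rw [Finset.sum_comm]
    refine Finset.sum_congr rfl fun σ _ => ?_
    rw [← Finset.sum_mul, hR, sq]
    ring
  rw [expand]
  have key : ∀ i : Fin n, ∑ σ : Fin n → Bool,
      (spinVec n σ i - bvec A β B (spinVec n σ) i) * (R (spinVec n σ) * w σ)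
      ≤ (2 + 2 * β * γ) * ∑ σ : Fin n → Bool, w σ := by
    intro i
    set G : (Fin n → Bool) → ℝ :=
      fun σ => (spinVec n σ i - bvec A β B (spinVec n σ) i) * (R (spinVec n σ) * w σ) with hG
    have hbij : Function.Bijective (fun σ : Fin n → Bool => Function.update σ i (!σ i)) :=
      (flip_invol i).bijective
    have hsum2 : (∑ σ, G σ) + (∑ σ, G σ)
        = ∑ σ : Fin n → Bool, (G σ + G (Function.update σ i (!σ i))) := by
      rw [Finset.sum_add_distrib]
      congr 1
      exact (Function.Bijective.sum_comp hbij G).symm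
    have hpt : ∀ σ : Fin n → Bool, G σ + G (Function.update σ i (!σ i))
        ≤ 2 * ((2 + 2 * β * γ) * w σ) := by
      intro σ
      set x : Fin n → ℝ := spinVec n σ with hx
      set x' : Fin n → ℝ := spinVec n (Function.update σ i (!σ i)) with hx'
      have hxx' : x' = Function.update x i (-(x i)) := spin_flip σ i
      have hml : ∀ j, mloc A x' j = mloc A x j + A j i * (-(x i) - x i) := by
        intro j; rw [hxx', mloc_update]
      have hmli : mloc A x' i = mloc A x i := by rw [hml i, hdiag i]; ring
      have hx'i : x' i = -(x i) := by rw [hxx', Function.update_self]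
      have hwflip : w (Function.update σ i (!σ i))
          = w σ * Real.exp ((-(x i) - x i) * (β * mloc A x i + B)) := by
        show isingWt A β B x' = isingWt A β B x * _
        rw [hxx', isingWt_update A hsymm β B x i (hdiag i)]
      have hanti : (x' i - bvec A β B x' i) * w (Function.update σ i (!σ i))
          = -((x i - bvec A β B x i) * w σ) := by
        rw [hwflip, hx'i]
        have hb' : bvec A β B x' i = bvec A β B x i := by
          unfold bvec; rw [hmli]
        rw [hb']
        have harg : (-(x i) - x i) * (β * mloc A x i + B)
            = -(2 * x i * (β * mloc A x i + B)) := by ring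
        rw [harg]
        have hs := spin_cases σ i
        rw [← hx] at hs
        have := flip_identity (β * mloc A x i + B) (x i) hs
        unfold bvec
        linear_combination w σ * this
      have hGflip : G (Function.update σ i (!σ i))
          = -((x i - bvec A β B x i) * w σ) * R x' := by
        rw [hG]
        show (x' i - bvec A β B x' i) * (R x' * w (Function.update σ i (!σ i))) = _
        rw [mul_comm (R x'), ← mul_assoc, hanti]
      have hRdiff : |R x - R x'| ≤ 2 + 2 * β * γ := by
        have hsub : R x - R x'
            = ∑ j, ((x j - bvec A β B x j) - (x' j - bvec A β B x' j)) := by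
          rw [hR, ← Finset.sum_sub_distrib]
        rw [hsub]
        refine le_trans (Finset.abs_sum_le_sum_abs _ _) ?_
        have hterm : ∀ j ∈ Finset.univ, |(x j - bvec A β B x j) - (x' j - bvec A β B x' j)|
            ≤ (if j = i then 2 else 0) + 2 * β * A j i := by
          intro j _
          have hbd : |bvec A β B x j - bvec A β B x' j| ≤ 2 * β * A j i := by
            unfold bvec
            refine le_trans (tanh_lip _ _) ?_
            rw [hml j]
            have : β * mloc A x j + B - (β * (mloc A x j + A j i * (-(x i) - x i)) + B)
                = 2 * β * A j i * x i := by ring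
            rw [this, abs_mul]
            have h1 : |x i| = 1 := by rw [hx]; exact abs_spin σ i
            rw [h1, mul_one, abs_of_nonneg (mul_nonneg (by positivity) (hnonneg j i))]
          have htri : |(x j - bvec A β B x j) - (x' j - bvec A β B x' j)|
              ≤ |x j - x' j| + |bvec A β B x j - bvec A β B x' j| := by
            have : (x j - bvec A β B x j) - (x' j - bvec A β B x' j)
                = (x j - x' j) - (bvec A β B x j - bvec A β B x' j) := by ring
            rw [this]
            exact abs_sub _ _
          refine le_trans htri ?_
          rcases eq_or_ne j i with rfl | h
          · have h2 : x j - x' j = 2 * x j := by rw [hx'i]; ring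
            have h1 : |x j| = 1 := by rw [hx]; exact abs_spin σ j
            rw [if_pos rfl, h2, abs_mul, h1, mul_one]
            exact add_le_add (by norm_num) hbd
          · have : x' j = x j := by
              rw [hxx', Function.update_of_ne h]
            rw [if_neg h, this]
            simpa using hbd
        refine le_trans (Finset.sum_le_sum hterm) ?_
        rw [Finset.sum_add_distrib, Finset.sum_ite_eq' Finset.univ i]
        simp only [Finset.mem_univ, if_true]
        have hcol : ∑ j, 2 * β * A j i = 2 * β * ∑ j, A i j := by
          rw [Finset.mul_sum]
          refine Finset.sum_congr rfl fun j _ => ?_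
          rw [hsymm.apply]
        rw [hcol]
        have : 2 * β * ∑ j, A i j ≤ 2 * β * γ :=
          mul_le_mul_of_nonneg_left (hγ i) (by positivity)
        linarith
      have habsc : |x i - bvec A β B x i| ≤ 2 := by
        have hb := abs_le.1 (abs_tanh_le_one (β * mloc A x i + B))
        have hs := spin_cases σ i
        rw [← hx] at hs
        have hbv : bvec A β B x i = Real.tanh (β * mloc A x i + B) := rfl
        rw [abs_le, hbv]
        rcases hs with h | h <;> rw [h] <;> constructor <;> linarith [hb.1, hb.2]
      have hcomb : G σ + G (Function.update σ i (!σ i))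
          = (x i - bvec A β B x i) * w σ * (R x - R x') := by
        rw [hGflip, hG]
        show (x i - bvec A β B x i) * (R x * w σ) + _ = _
        ring
      rw [hcomb]
      calc (x i - bvec A β B x i) * w σ * (R x - R x')
          ≤ |(x i - bvec A β B x i) * w σ * (R x - R x')| := le_abs_self _
        _ = |x i - bvec A β B x i| * (|R x - R x'| * w σ) := by
            rw [abs_mul, abs_mul, abs_of_pos (hwpos σ)]; ring
        _ ≤ 2 * ((2 + 2 * β * γ) * w σ) := by
            have hC : (0:ℝ) ≤ 2 + 2 * β * γ := le_trans (abs_nonneg _) hRdiff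
            have h1 : |R x - R x'| * w σ ≤ (2 + 2 * β * γ) * w σ :=
              mul_le_mul_of_nonneg_right hRdiff (hwpos σ).le
            have h2 : (0:ℝ) ≤ |R x - R x'| * w σ := mul_nonneg (abs_nonneg _) (hwpos σ).le
            nlinarith [habsc, abs_nonneg (x i - bvec A β B x i)]
    have h2T : (∑ σ, G σ) + (∑ σ, G σ)
        ≤ 2 * ((2 + 2 * β * γ) * ∑ σ : Fin n → Bool, w σ) := by
      rw [hsum2]
      refine le_trans (Finset.sum_le_sum fun σ _ => hpt σ) ?_
      rw [← Finset.mul_sum, ← Finset.mul_sum]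
    linarith
  refine le_trans (Finset.sum_le_sum fun i (_ : i ∈ Finset.univ) => key i) ?_
  rw [Finset.sum_const, Finset.card_univ, Fintype.card_fin, nsmul_eq_mul]
  exact le_of_eq (by ring)

/-- `limsup (1/n) E[(∑ᵢ (Xᵢ - bᵢ(X)))²] < ∞`. -/
theorem stmt13 (A : (n : ℕ) → Matrix (Fin n) (Fin n) ℝ)
    (hsymm : ∀ n, (A n).IsSymm)
    (hnonneg : ∀ n, ∀ i j : Fin n, 0 ≤ A n i j)
    (hdiag : ∀ n, ∀ i : Fin n, A n i i = 0)
    (hBD : ∃ γ : ℝ, ∀ n, ∀ i : Fin n, (∑ j, A n i j) ≤ γ)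
    (hMF : Tendsto (fun n : ℕ => (1 / (n : ℝ)) * ∑ i, ∑ j, (A n i j) ^ 2) atTop (nhds 0))
    (β B : ℝ) (hβ : 0 < β) (hB : B ≠ 0) :
    IsBoundedUnder (· ≤ ·) atTop (fun n : ℕ => (1 / (n : ℝ)) * isingExp (A n) β B
      (fun x => (∑ i, (x i - bvec (A n) β B x i)) ^ 2)) := by
  obtain ⟨γ, hγ⟩ := hBD
  refine ⟨2 + 2 * β * γ, ?_⟩
  rw [eventually_map]
  filter_upwards [eventually_ge_atTop 1] with n hn
  have hmb := main_bound (A n) (hsymm n) (hnonneg n) (hdiag n) β B γ hβ (hγ n)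
  have hn0 : (n : ℝ) ≠ 0 := Nat.cast_ne_zero.2 (by omega)
  calc (1 / (n : ℝ)) * isingExp (A n) β B (fun x => (∑ i, (x i - bvec (A n) β B x i)) ^ 2)
      ≤ (1 / (n : ℝ)) * ((n : ℝ) * (2 + 2 * β * γ)) :=
        mul_le_mul_of_nonneg_left hmb (by positivity)
    _ = 2 + 2 * β * γ := by field_simp
end
end

section
/- Let {A_n} be a sequence of n×n symmetric matrices with nonnegative entries and zeros on the diagonal satisfying (BD) and (NT), and let (β₀, B₀) ∈ Θ. Then there exists δ > 0 such that limsup_{n→∞} (1/n) log P_{n,β₀,B₀}( |Σ_{i=1}^n X_i m_i(X)| < nδ ) < 0. -/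
open Filter

set_option maxHeartbeats 1000000

noncomputable section

lemma sum_prod_bool {n : ℕ} (g : Fin n → Bool → ℝ) :
    ∑ σ : Fin n → Bool, ∏ i, g i (σ i) = ∏ i, (g i true + g i false) := by
  have h := Finset.prod_univ_sum (fun _ : Fin n => (Finset.univ : Finset Bool)) g
  rw [Fintype.piFinset_univ] at h
  rw [← h]
  congr 1; ext i
  simp [Finset.sum_ite_eq]

lemma pair_sum {n : ℕ} (B : ℝ) {i j : Fin n} (hij : i ≠ j) :
    ∑ σ : Fin n → Bool, Real.exp (B * ∑ k, spinVec n σ k) * spinVec n σ i * spinVec n σ j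
      = (Real.tanh B)^2 * ∑ σ : Fin n → Bool, Real.exp (B * ∑ k, spinVec n σ k) := by
  set C := Real.exp B + Real.exp (-B) with hCdef
  set D := Real.exp B - Real.exp (-B) with hDdef
  have hC : 0 < C := by positivity
  have hw : ∀ σ : Fin n → Bool, Real.exp (B * ∑ k, spinVec n σ k)
      = ∏ k, Real.exp (B * spinVec n σ k) := by
    intro σ; rw [Finset.mul_sum, Real.exp_sum]
  have ht : Real.tanh B = D / C := by
    rw [Real.tanh_eq_sinh_div_cosh, Real.sinh_eq, Real.cosh_eq, hCdef, hDdef]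
    field_simp
  -- LHS as factored product
  have hL : (∑ σ : Fin n → Bool, Real.exp (B * ∑ k, spinVec n σ k) * spinVec n σ i * spinVec n σ j)
      = ∏ k, (if k = i ∨ k = j then D else C) := by
    have h1 : ∀ σ : Fin n → Bool,
        Real.exp (B * ∑ k, spinVec n σ k) * spinVec n σ i * spinVec n σ j
        = ∏ k, (Real.exp (B * spinVec n σ k) * (if k = i then spinVec n σ k else 1)
            * (if k = j then spinVec n σ k else 1)) := by
      intro σ
      rw [Finset.prod_mul_distrib, Finset.prod_mul_distrib, ← hw σ]
      congr 1
      · congr 1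
        rw [Finset.prod_ite_eq' Finset.univ i (fun k => spinVec n σ k)]
        simp
      · rw [Finset.prod_ite_eq' Finset.univ j (fun k => spinVec n σ k)]
        simp
    have h2 : (∑ σ : Fin n → Bool,
        ∏ k, (Real.exp (B * spinVec n σ k) * (if k = i then spinVec n σ k else 1)
            * (if k = j then spinVec n σ k else 1)))
        = ∑ σ : Fin n → Bool, ∏ k, (fun (k : Fin n) (b : Bool) =>
            Real.exp (B * (if b then (1:ℝ) else -1)) * (if k = i then (if b then (1:ℝ) else -1) else 1)
            * (if k = j then (if b then (1:ℝ) else -1) else 1)) k (σ k) := rfl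
    have h3 := sum_prod_bool (fun (k : Fin n) (b : Bool) =>
            Real.exp (B * (if b then (1:ℝ) else -1)) * (if k = i then (if b then (1:ℝ) else -1) else 1)
            * (if k = j then (if b then (1:ℝ) else -1) else 1))
    rw [Finset.sum_congr rfl (fun σ _ => h1 σ), h2, h3]
    congr 1; ext k
    by_cases hki : k = i
    · subst hki
      simp [hij, hDdef, sub_eq_add_neg]
    · by_cases hkj : k = j
      · subst hkj
        simp [Ne.symm hij, hki, hDdef, sub_eq_add_neg]
      · simp [hki, hkj, spinVec, hCdef]
  have hR : (∑ σ : Fin n → Bool, Real.exp (B * ∑ k, spinVec n σ k)) = ∏ _k : Fin n, C := by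
    have h1 : ∀ σ : Fin n → Bool, Real.exp (B * ∑ k, spinVec n σ k)
        = ∏ k, Real.exp (B * spinVec n σ k) := hw
    have h2 : (∑ σ : Fin n → Bool, ∏ k, Real.exp (B * spinVec n σ k))
        = ∑ σ : Fin n → Bool, ∏ k, (fun (_k : Fin n) (b : Bool) =>
            Real.exp (B * (if b then (1:ℝ) else -1))) k (σ k) := rfl
    have h3 := sum_prod_bool (fun (_k : Fin n) (b : Bool) =>
            Real.exp (B * (if b then (1:ℝ) else -1)))
    rw [Finset.sum_congr rfl (fun σ _ => h1 σ), h2, h3]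
    congr 1; ext k
    simp [hCdef]
  rw [hL, hR]
  -- split products over {i,j} and its complement
  have hsplit : ∀ f : Fin n → ℝ, (∏ k ∈ ({i, j} : Finset (Fin n)), f k)
      * (∏ k ∈ ({i, j} : Finset (Fin n))ᶜ, f k) = ∏ k, f k :=
    fun f => Finset.prod_mul_prod_compl _ f
  rw [← hsplit (fun k => if k = i ∨ k = j then D else C), ← hsplit (fun _ => C)]
  have e1 : (∏ k ∈ ({i, j} : Finset (Fin n)), (if k = i ∨ k = j then D else C)) = D ^ 2 := by
    rw [Finset.prod_congr rfl (fun k hk => ?_), Finset.prod_const,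
      Finset.card_pair hij]
    have : k = i ∨ k = j := by simpa using hk
    simp [this]
  have e2 : (∏ k ∈ ({i, j} : Finset (Fin n))ᶜ, (if k = i ∨ k = j then D else C))
      = C ^ (({i, j} : Finset (Fin n))ᶜ).card := by
    rw [Finset.prod_congr rfl (fun k hk => ?_), Finset.prod_const]
    have : ¬(k = i ∨ k = j) := by simpa using hk
    simp [this]
  have e3 : (∏ k ∈ ({i, j} : Finset (Fin n)), C) = C ^ 2 := by
    rw [Finset.prod_const, Finset.card_pair hij]
  have e4 : (∏ k ∈ ({i, j} : Finset (Fin n))ᶜ, C) = C ^ (({i, j} : Finset (Fin n))ᶜ).card :=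
    Finset.prod_const C
  rw [e1, e2, e3, e4, ht]
  field_simp

lemma weighted_quad_sum {n : ℕ} (B : ℝ) (A : Matrix (Fin n) (Fin n) ℝ)
    (hdiag : ∀ i, A i i = 0) :
    ∑ σ : Fin n → Bool, Real.exp (B * ∑ k, spinVec n σ k)
        * (∑ i, ∑ j, A i j * spinVec n σ i * spinVec n σ j)
      = (Real.tanh B)^2 * (∑ i, ∑ j, A i j)
        * ∑ σ : Fin n → Bool, Real.exp (B * ∑ k, spinVec n σ k) := by
  have key : ∀ i j : Fin n,
      (∑ σ : Fin n → Bool, A i j * (Real.exp (B * ∑ k, spinVec n σ k)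
        * spinVec n σ i * spinVec n σ j))
      = A i j * ((Real.tanh B)^2
          * ∑ σ : Fin n → Bool, Real.exp (B * ∑ k, spinVec n σ k)) := by
    intro i j
    rw [← Finset.mul_sum]
    by_cases hij : i = j
    · subst hij; simp [hdiag i]
    · rw [pair_sum B hij]
  have step1 : ∑ σ : Fin n → Bool, Real.exp (B * ∑ k, spinVec n σ k)
        * (∑ i, ∑ j, A i j * spinVec n σ i * spinVec n σ j)
      = ∑ i, ∑ j, ∑ σ : Fin n → Bool, A i j * (Real.exp (B * ∑ k, spinVec n σ k)
        * spinVec n σ i * spinVec n σ j) := by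
    have hterm : ∀ σ : Fin n → Bool, Real.exp (B * ∑ k, spinVec n σ k)
        * (∑ i, ∑ j, A i j * spinVec n σ i * spinVec n σ j)
        = ∑ i, ∑ j, A i j * (Real.exp (B * ∑ k, spinVec n σ k)
          * spinVec n σ i * spinVec n σ j) := by
      intro σ
      rw [Finset.mul_sum]
      refine Finset.sum_congr rfl (fun i _ => ?_)
      rw [Finset.mul_sum]
      refine Finset.sum_congr rfl (fun j _ => ?_)
      ring
    rw [Finset.sum_congr rfl (fun σ _ => hterm σ), Finset.sum_comm]
    exact Finset.sum_congr rfl (fun i _ => Finset.sum_comm)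
  rw [step1, Finset.sum_congr rfl (fun i _ => Finset.sum_congr rfl (fun j _ => key i j))]
  simp only [← Finset.sum_mul]
  ring

lemma cube_ivt {n : ℕ} (F : (Fin n → Bool) → ℝ) (c e : ℝ) (hce : c < e) (he : 0 < e)
    (hstep : ∀ σ (i : Fin n), |F (Function.update σ i (!σ i)) - F σ| ≤ c) :
    ∀ d : ℕ, ∀ σ₀ σ₁ : Fin n → Bool,
      (Finset.univ.filter (fun i => σ₀ i ≠ σ₁ i)).card = d →
      F σ₀ ≤ 0 → 0 ≤ F σ₁ → ∃ σ, |F σ| < e := by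
  intro d
  induction d with
  | zero =>
    intro σ₀ σ₁ hcard h0 h1
    have hempty : (Finset.univ.filter (fun i => σ₀ i ≠ σ₁ i)) = ∅ :=
      Finset.card_eq_zero.mp hcard
    have heq : σ₀ = σ₁ := by
      funext i
      by_contra h
      have : i ∈ Finset.univ.filter (fun i => σ₀ i ≠ σ₁ i) := by
        simp [Finset.mem_filter, h]
      rw [hempty] at this
      exact absurd this (Finset.notMem_empty i)
    refine ⟨σ₀, ?_⟩
    rw [heq] at h0
    have : F σ₁ = 0 := le_antisymm h0 h1
    rw [heq, this, abs_zero]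
    exact he
  | succ d ih =>
    intro σ₀ σ₁ hcard h0 h1
    have hne : (Finset.univ.filter (fun i => σ₀ i ≠ σ₁ i)).Nonempty := by
      rw [← Finset.card_pos, hcard]; exact Nat.succ_pos d
    obtain ⟨i, hi⟩ := hne
    have hi' : σ₀ i ≠ σ₁ i := (Finset.mem_filter.mp hi).2
    set σ' := Function.update σ₀ i (!σ₀ i) with hσ'
    have hσ'i : σ' i = σ₁ i := by
      rw [hσ', Function.update_self]
      cases h₀ : σ₀ i <;> cases h₁ : σ₁ i <;> simp_all
    have hσ'k : ∀ k, k ≠ i → σ' k = σ₀ k := by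
      intro k hk; rw [hσ', Function.update_of_ne hk]
    have hfilter : Finset.univ.filter (fun k => σ' k ≠ σ₁ k)
        = (Finset.univ.filter (fun k => σ₀ k ≠ σ₁ k)).erase i := by
      ext k
      simp only [Finset.mem_filter, Finset.mem_erase, Finset.mem_univ, true_and]
      by_cases hk : k = i
      · subst hk; simp [hσ'i]
      · rw [hσ'k k hk]; tauto
    have hdiff : |F σ' - F σ₀| ≤ c := hstep σ₀ i
    rcases le_total (F σ') 0 with h | h
    · refine ih σ' σ₁ ?_ h h1
      rw [hfilter, Finset.card_erase_of_mem hi, hcard]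
      omega
    · refine ⟨σ', ?_⟩
      rw [abs_of_nonneg h]
      have h2 : F σ' - F σ₀ ≤ c := (abs_le.mp hdiff).2
      linarith

lemma step_bound {n : ℕ} (A : Matrix (Fin n) (Fin n) ℝ) (hsymm : A.IsSymm)
    (hnonneg : ∀ i j, 0 ≤ A i j) (hdiag : ∀ i : Fin n, A i i = 0) (γ : ℝ)
    (hrow : ∀ i, (∑ j, A i j) ≤ γ) (x x' : Fin n → ℝ) (hx : ∀ k, |x k| ≤ 1)
    (hx' : ∀ k, |x' k| ≤ 1) (i : Fin n) (hagree : ∀ k, k ≠ i → x' k = x k) :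
    |(∑ a, ∑ b, A a b * x' a * x' b) - (∑ a, ∑ b, A a b * x a * x b)| ≤ 4 * γ := by
  set f : Fin n → Fin n → ℝ := fun a b => A a b * (x' a * x' b - x a * x b) with hf
  have hzero : ∀ a b, a ≠ i → b ≠ i → f a b = 0 := by
    intro a b ha hb
    rw [hf]; simp only
    rw [hagree a ha, hagree b hb]; ring
  have hΔ : (∑ a, ∑ b, A a b * x' a * x' b) - (∑ a, ∑ b, A a b * x a * x b)
      = ∑ a, ∑ b, f a b := by
    rw [← Finset.sum_sub_distrib]
    refine Finset.sum_congr rfl (fun a _ => ?_)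
    rw [← Finset.sum_sub_distrib]
    refine Finset.sum_congr rfl (fun b _ => ?_)
    rw [hf]; ring
  have hsplit : (∑ a, ∑ b, f a b) = (∑ b, f i b) + ((∑ a, f a i) - f i i) := by
    rw [← Finset.add_sum_erase Finset.univ (fun a => ∑ b, f a b) (Finset.mem_univ i)]
    congr 1
    have : ∀ a ∈ Finset.univ.erase i, (∑ b, f a b) = f a i := by
      intro a ha
      refine Finset.sum_eq_single i (fun b _ hb => hzero a b (Finset.ne_of_mem_erase ha) hb)
        (fun h => absurd (Finset.mem_univ i) h)
    rw [Finset.sum_congr rfl this]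
    rw [← Finset.add_sum_erase Finset.univ (fun a => f a i) (Finset.mem_univ i)]
    ring
  have hfii : f i i = 0 := by rw [hf]; simp [hdiag i]
  have habs : ∀ a b, |f a b| ≤ 2 * A a b := by
    intro a b
    rw [hf]; simp only
    rw [abs_mul, abs_of_nonneg (hnonneg a b)]
    have h1 : |x' a * x' b - x a * x b| ≤ 2 := by
      have := abs_sub (x' a * x' b) (x a * x b)
      have e1 : |x' a * x' b| ≤ 1 := by
        rw [abs_mul]; exact mul_le_one₀ (hx' a) (abs_nonneg _) (hx' b)
      have e2 : |x a * x b| ≤ 1 := by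
        rw [abs_mul]; exact mul_le_one₀ (hx a) (abs_nonneg _) (hx b)
      calc |x' a * x' b - x a * x b| ≤ |x' a * x' b| + |x a * x b| := abs_sub _ _
        _ ≤ 2 := by linarith
    nlinarith [hnonneg a b, abs_nonneg (x' a * x' b - x a * x b)]
  have hrowbound : (∑ b, |f i b|) ≤ 2 * γ := by
    calc (∑ b, |f i b|) ≤ ∑ b, 2 * A i b := Finset.sum_le_sum (fun b _ => habs i b)
      _ = 2 * ∑ b, A i b := by rw [Finset.mul_sum]
      _ ≤ 2 * γ := by linarith [hrow i]
  have hcolbound : (∑ a, |f a i|) ≤ 2 * γ := by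
    have hAsymm : ∀ a, A a i = A i a := fun a => hsymm.apply i a
    calc (∑ a, |f a i|) ≤ ∑ a, 2 * A a i := Finset.sum_le_sum (fun a _ => habs a i)
      _ = 2 * ∑ a, A i a := by
          rw [Finset.mul_sum]
          exact Finset.sum_congr rfl fun a _ => by rw [hAsymm a]
      _ ≤ 2 * γ := by linarith [hrow i]
  rw [hΔ, hsplit, hfii, sub_zero]
  calc |(∑ b, f i b) + (∑ a, f a i)| ≤ |∑ b, f i b| + |∑ a, f a i| := abs_add_le _ _
    _ ≤ (∑ b, |f i b|) + (∑ a, |f a i|) := by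
        gcongr <;> exact Finset.abs_sum_le_sum_abs _ _
    _ ≤ 4 * γ := by linarith

lemma key_bounds {n : ℕ} (A : Matrix (Fin n) (Fin n) ℝ) (hsymm : A.IsSymm)
    (hnonneg : ∀ i j, 0 ≤ A i j) (hdiag : ∀ i : Fin n, A i i = 0) (γ : ℝ) (hγ0 : 0 ≤ γ)
    (hrow : ∀ i, (∑ j, A i j) ≤ γ) (β₀ B₀ : ℝ) (hβ : 0 < β₀) (δ : ℝ) (hδ : 0 < δ)
    (hn1 : 1 ≤ n) (hγδ : 4 * γ < (n : ℝ) * δ) :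
    Real.exp (-(Real.log 2 + 2 * (β₀ / 2 * γ + |B₀|)) * (n : ℝ))
      ≤ isingProb A β₀ B₀ {x | |∑ i, x i * mloc A x i| < (n : ℝ) * δ} ∧
    isingProb A β₀ B₀ {x | |∑ i, x i * mloc A x i| < (n : ℝ) * δ}
      ≤ Real.exp (β₀ / 2 * ((n : ℝ) * δ - (Real.tanh B₀)^2 * (∑ i, ∑ j, A i j))) := by
  classical
  set t := Real.tanh B₀ with htdef
  set S := ∑ i, ∑ j, A i j with hSdef
  set Q : (Fin n → ℝ) → ℝ := fun x => ∑ i, ∑ j, A i j * x i * x j with hQdef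
  set E : Set (Fin n → ℝ) := {x | |∑ i, x i * mloc A x i| < (n : ℝ) * δ} with hEdef
  -- rewrite the event statistic
  have hQeq : ∀ x : Fin n → ℝ, (∑ i, x i * mloc A x i) = Q x := by
    intro x
    refine Finset.sum_congr rfl (fun i _ => ?_)
    rw [mloc, Finset.mul_sum]
    exact Finset.sum_congr rfl (fun j _ => by ring)
  have hmemE : ∀ x : Fin n → ℝ, x ∈ E ↔ |Q x| < (n : ℝ) * δ := by
    intro x; rw [hEdef]; simp only [Set.mem_setOf_eq, hQeq]
  -- basic spin facts
  have hspin_abs : ∀ (σ : Fin n → Bool) (k : Fin n), |spinVec n σ k| ≤ 1 := by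
    intro σ k; rcases h : σ k with _ | _ <;> simp [spinVec, h]
  have hspin_sum : ∀ σ : Fin n → Bool, |∑ k, spinVec n σ k| ≤ (n : ℝ) := by
    intro σ
    calc |∑ k, spinVec n σ k| ≤ ∑ k, |spinVec n σ k| := Finset.abs_sum_le_sum_abs _ _
      _ ≤ ∑ _k : Fin n, (1 : ℝ) := Finset.sum_le_sum (fun k _ => hspin_abs σ k)
      _ = (n : ℝ) := by simp
  have hSnonneg : 0 ≤ S := Finset.sum_nonneg fun i _ =>
    Finset.sum_nonneg fun j _ => hnonneg i j
  have hSγ : S ≤ γ * n := by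
    calc S ≤ ∑ _i : Fin n, γ := Finset.sum_le_sum (fun i _ => hrow i)
      _ = γ * n := by simp [mul_comm]
  have hQbound : ∀ σ : Fin n → Bool, |Q (spinVec n σ)| ≤ γ * n := by
    intro σ
    have : |Q (spinVec n σ)| ≤ S := by
      calc |Q (spinVec n σ)| ≤ ∑ i, |∑ j, A i j * spinVec n σ i * spinVec n σ j| :=
          Finset.abs_sum_le_sum_abs _ _
        _ ≤ ∑ i, ∑ j, |A i j * spinVec n σ i * spinVec n σ j| :=
          Finset.sum_le_sum (fun i _ => Finset.abs_sum_le_sum_abs _ _)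
        _ ≤ S := by
          refine Finset.sum_le_sum (fun i _ => Finset.sum_le_sum (fun j _ => ?_))
          rw [abs_mul, abs_mul, abs_of_nonneg (hnonneg i j)]
          calc A i j * |spinVec n σ i| * |spinVec n σ j|
              ≤ A i j * 1 * 1 := by
                apply mul_le_mul
                · exact mul_le_mul_of_nonneg_left (hspin_abs σ i) (hnonneg i j)
                · exact hspin_abs σ j
                · exact abs_nonneg _
                · simpa using hnonneg i j
            _ = A i j := by ring
    linarith
  -- weights
  set w : (Fin n → Bool) → ℝ := fun σ => Real.exp (B₀ * ∑ k, spinVec n σ k) with hwdef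
  set W := ∑ σ : Fin n → Bool, w σ with hWdef
  have hWpos : 0 < W := Finset.sum_pos (fun σ _ => Real.exp_pos _) Finset.univ_nonempty
  have hwt : ∀ σ : Fin n → Bool, isingWt A β₀ B₀ (spinVec n σ)
      = w σ * Real.exp (β₀ / 2 * Q (spinVec n σ)) := by
    intro σ
    rw [isingWt, hwdef]
    rw [← Real.exp_add]
    congr 1
    ring
  set Z := ∑ σ : Fin n → Bool, isingWt A β₀ B₀ (spinVec n σ) with hZdef
  have hZpos : 0 < Z := Finset.sum_pos (fun σ _ => Real.exp_pos _) Finset.univ_nonempty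
  -- Jensen lower bound on Z
  have hJensen : W * Real.exp (β₀ / 2 * (t ^ 2 * S)) ≤ Z := by
    have hquad : (∑ σ : Fin n → Bool, w σ * Q (spinVec n σ)) = t ^ 2 * S * W := by
      have h0 := weighted_quad_sum B₀ A hdiag
      simp only [hwdef, hQdef, htdef, hSdef, hWdef]
      rw [h0]
    have hsum1 : ∑ σ : Fin n → Bool, w σ / W = 1 := by
      rw [← Finset.sum_div, ← hWdef, div_self (ne_of_gt hWpos)]
    have hjen := convexOn_exp.map_sum_le (t := Finset.univ)
      (w := fun σ : Fin n → Bool => w σ / W)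
      (p := fun σ : Fin n → Bool => β₀ / 2 * Q (spinVec n σ))
      (fun σ _ => div_nonneg (le_of_lt (Real.exp_pos _)) (le_of_lt hWpos))
      hsum1 (fun σ _ => Set.mem_univ _)
    have harg : (∑ σ : Fin n → Bool, (w σ / W) • (β₀ / 2 * Q (spinVec n σ)))
        = β₀ / 2 * (t ^ 2 * S) := by
      have h5 : (∑ σ : Fin n → Bool, (w σ / W) • (β₀ / 2 * Q (spinVec n σ)))
          = (β₀ / 2) * (∑ σ : Fin n → Bool, w σ * Q (spinVec n σ)) / W := by
        rw [Finset.mul_sum, Finset.sum_div]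
        refine Finset.sum_congr rfl (fun σ _ => ?_)
        rw [smul_eq_mul, div_mul_eq_mul_div]
        congr 1
        ring
      rw [h5, hquad]
      field_simp
    rw [harg] at hjen
    have hrhs : (∑ σ : Fin n → Bool, (w σ / W) • Real.exp (β₀ / 2 * Q (spinVec n σ)))
        = Z / W := by
      rw [hZdef, Finset.sum_div]
      refine Finset.sum_congr rfl (fun σ _ => ?_)
      rw [hwt σ, smul_eq_mul]; ring
    rw [hrhs] at hjen
    calc W * Real.exp (β₀ / 2 * (t ^ 2 * S)) ≤ W * (Z / W) :=
        mul_le_mul_of_nonneg_left hjen (le_of_lt hWpos)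
      _ = Z := by field_simp
  -- numerator upper bound
  set N := ∑ σ : Fin n → Bool, E.indicator (isingWt A β₀ B₀) (spinVec n σ) with hNdef
  have hNupper : N ≤ Real.exp (β₀ / 2 * ((n : ℝ) * δ)) * W := by
    rw [hNdef, hWdef, Finset.mul_sum]
    refine Finset.sum_le_sum (fun σ _ => ?_)
    rw [Set.indicator_apply]
    by_cases hσ : spinVec n σ ∈ E
    · rw [if_pos hσ, hwt σ]
      have hQσ : Q (spinVec n σ) ≤ (n : ℝ) * δ :=
        le_of_lt (lt_of_abs_lt ((hmemE _).mp hσ))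
      calc w σ * Real.exp (β₀ / 2 * Q (spinVec n σ))
          ≤ w σ * Real.exp (β₀ / 2 * ((n : ℝ) * δ)) := by
            apply mul_le_mul_of_nonneg_left _ (le_of_lt (Real.exp_pos _))
            exact Real.exp_le_exp.mpr (by nlinarith)
        _ = Real.exp (β₀ / 2 * ((n : ℝ) * δ)) * w σ := by ring
    · rw [if_neg hσ]; positivity
  -- nonemptiness of the event among spin configurations
  have hexists : ∃ σ : Fin n → Bool, |Q (spinVec n σ)| < (n : ℝ) * δ := by
    -- a configuration with nonpositive Q
    have hzero : (∑ σ : Fin n → Bool, Q (spinVec n σ)) = 0 := by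
      have h := weighted_quad_sum 0 A hdiag
      simp only [zero_mul, Real.exp_zero, one_mul, Real.tanh_zero] at h
      simpa using h
    have hσ0 : ∃ σ₀ : Fin n → Bool, Q (spinVec n σ₀) ≤ 0 := by
      by_contra hcon
      push_neg at hcon
      have : 0 < ∑ σ : Fin n → Bool, Q (spinVec n σ) :=
        Finset.sum_pos (fun σ _ => hcon σ) Finset.univ_nonempty
      rw [hzero] at this
      exact lt_irrefl 0 this
    obtain ⟨σ₀, hσ₀⟩ := hσ0
    have hσ1 : 0 ≤ Q (spinVec n (fun _ => true)) := by
      rw [hQdef]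
      simp only [spinVec, if_pos]
      refine Finset.sum_nonneg (fun i _ => Finset.sum_nonneg (fun j _ => ?_))
      simpa using hnonneg i j
    have hstep : ∀ (σ : Fin n → Bool) (i : Fin n),
        |Q (spinVec n (Function.update σ i (!σ i))) - Q (spinVec n σ)| ≤ 4 * γ := by
      intro σ i
      refine step_bound A hsymm hnonneg hdiag γ hrow (spinVec n σ)
        (spinVec n (Function.update σ i (!σ i))) (hspin_abs σ)
        (hspin_abs _) i (fun k hk => ?_)
      simp [spinVec, Function.update_of_ne hk]
    have := cube_ivt (fun σ => Q (spinVec n σ)) (4 * γ) ((n : ℝ) * δ) hγδ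
      (lt_of_le_of_lt (by linarith : (0:ℝ) ≤ 4 * γ) hγδ) hstep
      ((Finset.univ.filter (fun i => σ₀ i ≠ (fun _ => true) i)).card) σ₀ (fun _ => true)
      rfl hσ₀ hσ1
    exact this
  obtain ⟨σstar, hσstar⟩ := hexists
  -- numerator lower bound
  set K := β₀ / 2 * γ + |B₀| with hKdef
  have hwtlow : Real.exp (-(K * n)) ≤ isingWt A β₀ B₀ (spinVec n σstar) := by
    rw [isingWt]
    apply Real.exp_le_exp.mpr
    have h1 : |β₀ / 2 * Q (spinVec n σstar)| ≤ β₀ / 2 * (γ * n) := by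
      rw [abs_mul, abs_of_nonneg (by positivity : (0:ℝ) ≤ β₀ / 2)]
      exact mul_le_mul_of_nonneg_left (hQbound σstar) (by positivity)
    have h2 : |B₀ * ∑ k, spinVec n σstar k| ≤ |B₀| * n := by
      rw [abs_mul]
      exact mul_le_mul_of_nonneg_left (hspin_sum σstar) (abs_nonneg _)
    have e1 := neg_abs_le (β₀ / 2 * Q (spinVec n σstar))
    have e2 := neg_abs_le (B₀ * ∑ k, spinVec n σstar k)
    have : β₀ / 2 * ∑ i, ∑ j, A i j * spinVec n σstar i * spinVec n σstar j
        = β₀ / 2 * Q (spinVec n σstar) := rfl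
    rw [this]
    rw [hKdef]
    nlinarith [e1, e2, h1, h2]
  have hNlow : Real.exp (-(K * n)) ≤ N := by
    refine le_trans hwtlow ?_
    rw [hNdef]
    have hmem : E.indicator (isingWt A β₀ B₀) (spinVec n σstar)
        = isingWt A β₀ B₀ (spinVec n σstar) := by
      rw [Set.indicator_apply, if_pos ((hmemE _).mpr hσstar)]
    calc isingWt A β₀ B₀ (spinVec n σstar)
        = E.indicator (isingWt A β₀ B₀) (spinVec n σstar) := hmem.symm
      _ ≤ N := Finset.single_le_sum (f := fun σ : Fin n → Bool =>
          E.indicator (isingWt A β₀ B₀) (spinVec n σ))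
          (fun σ _ => Set.indicator_nonneg (fun x _ => le_of_lt (Real.exp_pos _)) _)
          (Finset.mem_univ σstar)
  -- Z upper bound
  have hZupper : Z ≤ 2 ^ n * Real.exp (K * n) := by
    rw [hZdef]
    calc (∑ σ : Fin n → Bool, isingWt A β₀ B₀ (spinVec n σ))
        ≤ ∑ _σ : Fin n → Bool, Real.exp (K * n) := by
          refine Finset.sum_le_sum (fun σ _ => ?_)
          rw [isingWt]
          apply Real.exp_le_exp.mpr
          have h1 : |β₀ / 2 * Q (spinVec n σ)| ≤ β₀ / 2 * (γ * n) := by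
            rw [abs_mul, abs_of_nonneg (by positivity : (0:ℝ) ≤ β₀ / 2)]
            exact mul_le_mul_of_nonneg_left (hQbound σ) (by positivity)
          have h2 : |B₀ * ∑ k, spinVec n σ k| ≤ |B₀| * n := by
            rw [abs_mul]
            exact mul_le_mul_of_nonneg_left (hspin_sum σ) (abs_nonneg _)
          have e1 := le_abs_self (β₀ / 2 * Q (spinVec n σ))
          have e2 := le_abs_self (B₀ * ∑ k, spinVec n σ k)
          have : β₀ / 2 * ∑ i, ∑ j, A i j * spinVec n σ i * spinVec n σ j
              = β₀ / 2 * Q (spinVec n σ) := rfl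
          rw [this, hKdef]
          nlinarith [e1, e2, h1, h2]
      _ = 2 ^ n * Real.exp (K * n) := by
          rw [Finset.sum_const, Finset.card_univ]
          simp [Fintype.card_fun]
  have hProb : isingProb A β₀ B₀ E = N / Z := rfl
  constructor
  · -- lower bound on the probability
    rw [hProb]
    have hlb : Real.exp (-(K * n)) / (2 ^ n * Real.exp (K * n)) ≤ N / Z :=
      div_le_div₀ (le_trans (le_of_lt (Real.exp_pos _)) hNlow) hNlow hZpos hZupper
    refine le_trans (le_of_eq ?_) hlb
    have h2n : (2:ℝ) ^ n = Real.exp ((n:ℝ) * Real.log 2) := by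
      rw [Real.exp_nat_mul, Real.exp_log (by norm_num : (0:ℝ) < 2)]
    rw [h2n, ← Real.exp_add, ← Real.exp_sub]
    congr 1
    ring
  · -- upper bound on the probability
    rw [hProb]
    have hub : N / Z ≤ (Real.exp (β₀ / 2 * ((n : ℝ) * δ)) * W)
        / (W * Real.exp (β₀ / 2 * (t ^ 2 * S))) :=
      div_le_div₀ (by positivity) hNupper (by positivity) hJensen
    refine le_trans hub (le_of_eq ?_)
    have hWne : W ≠ 0 := ne_of_gt hWpos
    rw [mul_comm (Real.exp (β₀ / 2 * ((n : ℝ) * δ))) W, mul_div_mul_left _ _ hWne,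
      ← Real.exp_sub]
    congr 1
    ring


/-- exponential lower-tail bound for `|∑ᵢ Xᵢ mᵢ(X)|`. -/
theorem stmt14 (A : (n : ℕ) → Matrix (Fin n) (Fin n) ℝ)
    (hsymm : ∀ n, (A n).IsSymm)
    (hnonneg : ∀ n, ∀ i j : Fin n, 0 ≤ A n i j)
    (hdiag : ∀ n, ∀ i : Fin n, A n i i = 0)
    (hBD : ∃ γ : ℝ, ∀ n, ∀ i : Fin n, (∑ j, A n i j) ≤ γ)
    (hNT : 0 < liminf (fun n : ℕ => (1 / (n : ℝ)) * ∑ i, ∑ j, A n i j) atTop)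
    (β₀ B₀ : ℝ) (hβ : 0 < β₀) (hB : B₀ ≠ 0) :
    ∃ δ > (0 : ℝ),
      limsup (fun n : ℕ => (1 / (n : ℝ)) * Real.log (isingProb (A n) β₀ B₀
        {x | |∑ i, x i * mloc (A n) x i| < (n : ℝ) * δ})) atTop < 0 := by
  classical
  obtain ⟨γ₀, hγ₀⟩ := hBD
  set γ := max γ₀ 0 with hγdef
  have hγnn : (0:ℝ) ≤ γ := le_max_right _ _
  have hrow : ∀ n (i : Fin n), (∑ j, A n i j) ≤ γ :=
    fun n i => le_trans (hγ₀ n i) (le_max_left _ _)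
  set t := Real.tanh B₀ with htdef
  have ht : t ≠ 0 := by
    rw [htdef, Real.tanh_eq_sinh_div_cosh]
    exact div_ne_zero (Real.sinh_ne_zero.mpr hB) (ne_of_gt (Real.cosh_pos B₀))
  have ht2 : 0 < t ^ 2 := lt_of_le_of_ne (sq_nonneg t) (Ne.symm (pow_ne_zero 2 ht))
  set g : ℕ → ℝ := fun n => (1 / (n : ℝ)) * ∑ i, ∑ j, A n i j with hgdef
  have hgbound : ∀ n, g n ≤ γ := by
    intro n
    rcases Nat.eq_zero_or_pos n with h0 | hpos
    · subst h0
      simp only [hgdef]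
      simp [hγnn]
    · have hn : (0:ℝ) < n := by exact_mod_cast hpos
      have hsum : (∑ i, ∑ j, A n i j) ≤ γ * n := by
        calc (∑ i, ∑ j, A n i j) ≤ ∑ _i : Fin n, γ :=
            Finset.sum_le_sum (fun i _ => hrow n i)
          _ = γ * n := by simp [mul_comm]
      have : g n ≤ (1 / (n:ℝ)) * (γ * n) := by
        simp only [hgdef]
        exact mul_le_mul_of_nonneg_left hsum (by positivity)
      calc g n ≤ (1 / (n:ℝ)) * (γ * n) := this
        _ = γ := by field_simp
  have hgnn : ∀ n, 0 ≤ g n := fun n => mul_nonneg (by positivity)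
    (Finset.sum_nonneg fun i _ => Finset.sum_nonneg fun j _ => hnonneg n i j)
  have hbdd2 : IsBoundedUnder (· ≥ ·) atTop g :=
    ⟨0, Filter.eventually_map.mpr (Filter.Eventually.of_forall hgnn)⟩
  set L := liminf g atTop with hLdef
  have hL : 0 < L := hNT
  have hc₀L : L / 2 < L := by linarith
  have hev1 : ∀ᶠ n in atTop, L / 2 < g n := eventually_lt_of_lt_liminf hc₀L hbdd2
  set c₀ := L / 2 with hc₀def
  have hc₀ : 0 < c₀ := by rw [hc₀def]; linarith
  set δ := t ^ 2 * c₀ / 2 with hδdef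
  have hδ : 0 < δ := by rw [hδdef]; positivity
  refine ⟨δ, hδ, ?_⟩
  set κ := β₀ * (t ^ 2 * c₀) / 4 with hκdef
  have hκ : 0 < κ := by rw [hκdef]; positivity
  set M := Real.log 2 + 2 * (β₀ / 2 * γ + |B₀|) with hMdef
  set F : ℕ → ℝ := fun n => (1 / (n : ℝ)) * Real.log (isingProb (A n) β₀ B₀
      {x | |∑ i, x i * mloc (A n) x i| < (n : ℝ) * δ}) with hFdef
  have hev2 : ∀ᶠ n : ℕ in atTop, 4 * γ < (n : ℝ) * δ := by
    have h := (tendsto_natCast_atTop_atTop (R := ℝ)).atTop_mul_const hδ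
    exact h.eventually_gt_atTop (4 * γ)
  have hev3 : ∀ᶠ n : ℕ in atTop, 1 ≤ n := eventually_ge_atTop 1
  have hkey : ∀ᶠ n in atTop, F n ≤ -κ ∧ -M ≤ F n := by
    filter_upwards [hev1, hev2, hev3] with n h1 h2 h3
    obtain ⟨hlow, hup⟩ := key_bounds (A n) (hsymm n) (hnonneg n) (hdiag n) γ hγnn
      (hrow n) β₀ B₀ hβ δ hδ h3 h2
    have hn : (0:ℝ) < n := by exact_mod_cast h3
    set P := isingProb (A n) β₀ B₀
      {x | |∑ i, x i * mloc (A n) x i| < (n : ℝ) * δ} with hPdef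
    have hP : 0 < P := lt_of_lt_of_le (Real.exp_pos _) hlow
    have hS : c₀ * n ≤ ∑ i, ∑ j, A n i j := by
      have := h1
      rw [hgdef] at this
      simp only at this
      have h4 : c₀ * n < (1 / (n:ℝ)) * (∑ i, ∑ j, A n i j) * n := by
        rw [hc₀def]
        exact mul_lt_mul_of_pos_right this hn
      have h5 : (1 / (n:ℝ)) * (∑ i, ∑ j, A n i j) * n = ∑ i, ∑ j, A n i j := by
        field_simp
      linarith [h4, h5.symm.le]
    constructor
    · -- upper bound
      have hlog : Real.log P ≤ β₀ / 2 * ((n : ℝ) * δ - t ^ 2 * (∑ i, ∑ j, A n i j)) :=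
        (Real.log_le_iff_le_exp hP).mpr hup
      have hbd : β₀ / 2 * ((n : ℝ) * δ - t ^ 2 * (∑ i, ∑ j, A n i j)) ≤ -κ * n := by
        have e1 : t ^ 2 * (c₀ * n) ≤ t ^ 2 * (∑ i, ∑ j, A n i j) :=
          mul_le_mul_of_nonneg_left hS (le_of_lt ht2)
        rw [hκdef, hδdef]
        nlinarith [e1]
      have : F n = (1 / (n:ℝ)) * Real.log P := rfl
      rw [this]
      have h6 : (1 / (n:ℝ)) * Real.log P ≤ (1 / (n:ℝ)) * (-κ * n) :=
        mul_le_mul_of_nonneg_left (by linarith) (by positivity)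
      have h7 : (1 / (n:ℝ)) * (-κ * n) = -κ := by field_simp
      linarith
    · -- lower bound
      have hlog : -M * n ≤ Real.log P := by
        rw [hMdef]
        exact (Real.le_log_iff_exp_le hP).mpr hlow
      have : F n = (1 / (n:ℝ)) * Real.log P := rfl
      rw [this]
      calc -M = (1 / (n:ℝ)) * (-M * n) := by field_simp
        _ ≤ (1 / (n:ℝ)) * Real.log P :=
          mul_le_mul_of_nonneg_left hlog (by positivity)
  have hub : ∀ᶠ n in atTop, F n ≤ -κ := hkey.mono fun n h => h.1
  have hlb : ∀ᶠ n in atTop, -M ≤ F n := hkey.mono fun n h => h.2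
  have hlim : limsup F atTop ≤ -κ :=
    limsup_le_of_le (isCoboundedUnder_le_of_eventually_le atTop hlb) hub
  exact lt_of_le_of_lt hlim (by linarith)
end
end

section
/- Fix β > 0 and B ≠ 0, and define φ : [−1,1] → ℝ by φ(y) := (β/2) y² + B y − I(y), where I(y) := ((1+y)/2) log((1+y)/2) + ((1−y)/2) log((1−y)/2) (with the convention 0·log 0 = 0 at y = ±1). Then φ attains its global maximum over [−1,1] at a unique point m₀, and m₀ ∈ (−1,1). -/
open Filter

noncomputable section

noncomputable def phi (β B y : ℝ) : ℝ :=
  β / 2 * y ^ 2 + B * y -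
    ((1 + y) / 2 * Real.log ((1 + y) / 2) + (1 - y) / 2 * Real.log ((1 - y) / 2))

noncomputable def gfun (β B y : ℝ) : ℝ :=
  β * y + B - (Real.log (1 + y) - Real.log (1 - y)) / 2

lemma phi_continuous (β B : ℝ) : Continuous (phi β B) := by
  unfold phi
  refine Continuous.sub (by continuity) (Continuous.add ?_ ?_)
  · exact Real.continuous_mul_log.comp (by continuity)
  · exact Real.continuous_mul_log.comp (by continuity)

lemma hasDerivAt_phi (β B y : ℝ) (h1 : -1 < y) (h2 : y < 1) :
    HasDerivAt (phi β B) (gfun β B y) y := by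
  have hp : (0:ℝ) < 1 + y := by linarith
  have hm : (0:ℝ) < 1 - y := by linarith
  have t1 : HasDerivAt (fun y : ℝ => (1 + y) / 2) (1 / 2) y := by
    simpa using (((hasDerivAt_id y).const_add 1).div_const 2)
  have t2 : HasDerivAt (fun y : ℝ => (1 - y) / 2) (-1 / 2) y := by
    simpa [sub_eq_add_neg] using (((hasDerivAt_id y).neg.const_add 1).div_const 2)
  have l1 : HasDerivAt (fun y : ℝ => Real.log ((1 + y) / 2)) ((1/2) / ((1 + y) / 2)) y :=
    t1.log (by positivity)
  have l2 : HasDerivAt (fun y : ℝ => Real.log ((1 - y) / 2)) ((-1/2) / ((1 - y) / 2)) y :=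
    t2.log (by positivity)
  have m1 := t1.mul l1
  have m2 := t2.mul l2
  have poly : HasDerivAt (fun y : ℝ => β / 2 * y ^ 2 + B * y) (β / 2 * (2 * y) + B) y := by
    have := ((hasDerivAt_pow 2 y).const_mul (β / 2)).add ((hasDerivAt_id y).const_mul B)
    simp at this; exact this
  have total := poly.sub (m1.add m2)
  refine total.congr_deriv (Eq.symm ?_)
  unfold gfun
  rw [show (1 + y)/2 = (1+y)/2 from rfl]
  rw [Real.log_div (by positivity) two_ne_zero, Real.log_div (by positivity) two_ne_zero]
  field_simp
  ring

lemma hasDerivAt_gfun (β B y : ℝ) (h1 : -1 < y) (h2 : y < 1) :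
    HasDerivAt (gfun β B) (β - 1 / (1 - y ^ 2)) y := by
  have hp : (0:ℝ) < 1 + y := by linarith
  have hm : (0:ℝ) < 1 - y := by linarith
  have l1 : HasDerivAt (fun y : ℝ => Real.log (1 + y)) (1 / (1 + y)) y := by
    simpa using ((hasDerivAt_id y).const_add 1).log (ne_of_gt hp)
  have l2 : HasDerivAt (fun y : ℝ => Real.log (1 - y)) (-1 / (1 - y)) y := by
    simpa [sub_eq_add_neg] using ((hasDerivAt_id y).neg.const_add 1).log (ne_of_gt hm)
  have lin : HasDerivAt (fun y : ℝ => β * y + B) β y := by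
    simpa using ((hasDerivAt_id y).const_mul β).add_const B
  have total := lin.sub ((l1.sub l2).div_const 2)
  refine total.congr_deriv (Eq.symm ?_)
  have : 1 - y ^ 2 = (1 + y) * (1 - y) := by ring
  rw [this]
  field_simp
  ring

lemma gfun_concave (β B : ℝ) : ConcaveOn ℝ (Set.Ico (0:ℝ) 1) (gfun β B) := by
  have hint : interior (Set.Ico (0:ℝ) 1) = Set.Ioo 0 1 := interior_Ico
  refine AntitoneOn.concaveOn_of_deriv (convex_Ico 0 1) ?_ ?_ ?_
  · intro x hx
    exact (hasDerivAt_gfun β B x (by linarith [hx.1]) hx.2).continuousAt.continuousWithinAt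
  · rw [hint]
    intro x hx
    exact (hasDerivAt_gfun β B x (by linarith [hx.1]) hx.2).differentiableAt.differentiableWithinAt
  · rw [hint]
    intro x hx y hy hxy
    rw [(hasDerivAt_gfun β B x (by linarith [hx.1]) hx.2).deriv,
      (hasDerivAt_gfun β B y (by linarith [hy.1]) hy.2).deriv]
    have h1 : (0:ℝ) < 1 - y ^ 2 := by nlinarith [hy.1, hy.2]
    have h2 : 1 - y ^ 2 ≤ 1 - x ^ 2 := by nlinarith [hx.1, hy.1]
    have := one_div_le_one_div_of_le h1 h2
    linarith

lemma key (β B : ℝ) (hβ : 0 < β) (hB : 0 < B) :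
    ∃ m₀ ∈ Set.Ioo (-1 : ℝ) 1,
      ∀ y ∈ Set.Icc (-1 : ℝ) 1, y ≠ m₀ → phi β B y < phi β B m₀ := by
  -- a point c near 1 with g c < 0
  set c : ℝ := 1 - Real.exp (-(2 * (β + B)) - 1) with hc
  have hce : Real.exp (-(2 * (β + B)) - 1) < 1 := by
    rw [Real.exp_lt_one_iff]; nlinarith
  have hc0 : 0 < c := by simp only [hc]; linarith
  have hc1 : c < 1 := by
    simp only [hc]; have := Real.exp_pos (-(2 * (β + B)) - 1); linarith
  have hgc : gfun β B c < 0 := by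
    unfold gfun
    have h1c : Real.log (1 - c) = -(2 * (β + B)) - 1 := by
      rw [show 1 - c = Real.exp (-(2 * (β + B)) - 1) from by simp [hc], Real.log_exp]
    have h2c : 0 ≤ Real.log (1 + c) := Real.log_nonneg (by linarith)
    rw [h1c]
    nlinarith
  have hg0 : gfun β B 0 = B := by simp [gfun]
  -- continuity of g on [0, c]
  have hgcont : ContinuousOn (gfun β B) (Set.Icc 0 c) := fun x hx =>
    (hasDerivAt_gfun β B x (by linarith [hx.1]) (by linarith [hx.2])).continuousAt.continuousWithinAt
  -- zero of g
  obtain ⟨m₀, hm₀mem, hgm₀⟩ : ∃ m₀ ∈ Set.Ioo (0:ℝ) c, gfun β B m₀ = 0 := by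
    have := intermediate_value_Ioo' (le_of_lt hc0) hgcont
    have h0 : (0:ℝ) ∈ Set.Ioo (gfun β B c) (gfun β B 0) := by
      rw [hg0]; exact ⟨hgc, hB⟩
    obtain ⟨m₀, hm, he⟩ := this h0
    exact ⟨m₀, hm, he⟩
  obtain ⟨hm₀0, hm₀c⟩ := hm₀mem
  have hm₀1 : m₀ < 1 := lt_trans hm₀c hc1
  have hconc := gfun_concave β B
  -- g positive on [0, m₀)
  have gpos : ∀ y ∈ Set.Ico (0:ℝ) m₀, 0 < gfun β B y := by
    rintro y ⟨hy0, hym⟩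
    set t : ℝ := y / m₀ with ht
    have ht0 : 0 ≤ t := div_nonneg hy0 hm₀0.le
    have ht1 : t < 1 := (div_lt_one hm₀0).2 hym
    have hcomb := hconc.2 (Set.mem_Ico.2 ⟨le_refl 0, one_pos⟩) (Set.mem_Ico.2 ⟨hm₀0.le, hm₀1⟩)
      (show (0:ℝ) ≤ 1 - t by linarith) (show (0:ℝ) ≤ t from ht0)
      (show (1 - t) + t = 1 by ring)
    have heq : (1 - t) • (0:ℝ) + t • m₀ = y := by
      simp [ht]; field_simp
    rw [heq, hgm₀, hg0] at hcomb
    have : (1 - t) * B ≤ gfun β B y := by simpa using hcomb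
    nlinarith
  -- g negative on (m₀, 1)
  have gneg : ∀ y ∈ Set.Ioo m₀ (1:ℝ), gfun β B y < 0 := by
    rintro y ⟨hmy, hy1⟩
    set t : ℝ := m₀ / y with ht
    have hy0 : 0 < y := lt_trans hm₀0 hmy
    have ht0 : 0 < t := div_pos hm₀0 hy0
    have ht1 : t < 1 := (div_lt_one hy0).2 hmy
    have hcomb := hconc.2 (Set.mem_Ico.2 ⟨le_refl 0, one_pos⟩) (Set.mem_Ico.2 ⟨hy0.le, hy1⟩)
      (show (0:ℝ) ≤ 1 - t by linarith) (show (0:ℝ) ≤ t from ht0.le)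
      (show (1 - t) + t = 1 by ring)
    have heq : (1 - t) • (0:ℝ) + t • y = m₀ := by
      simp [ht]; field_simp
    rw [heq, hgm₀, hg0] at hcomb
    have h2 : (1 - t) * B + t * gfun β B y ≤ 0 := by simpa using hcomb
    nlinarith
  -- phi strictly increases on [0, m₀] and strictly decreases on [m₀, 1]
  have hmono : StrictMonoOn (phi β B) (Set.Icc 0 m₀) := by
    refine strictMonoOn_of_deriv_pos (convex_Icc 0 m₀) (phi_continuous β B).continuousOn ?_
    intro x hx
    rw [interior_Icc] at hx
    rw [(hasDerivAt_phi β B x (by linarith [hx.1]) (by linarith [hx.2])).deriv]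
    exact gpos x ⟨hx.1.le, hx.2⟩
  have hanti : StrictAntiOn (phi β B) (Set.Icc m₀ 1) := by
    refine strictAntiOn_of_deriv_neg (convex_Icc m₀ 1) (phi_continuous β B).continuousOn ?_
    intro x hx
    rw [interior_Icc] at hx
    rw [(hasDerivAt_phi β B x (by linarith [hx.1]) hx.2).deriv]
    exact gneg x hx
  -- max on [0,1]
  have hmax : ∀ y ∈ Set.Icc (0:ℝ) 1, y ≠ m₀ → phi β B y < phi β B m₀ := by
    rintro y ⟨hy0, hy1⟩ hne
    rcases lt_or_gt_of_ne hne with h | h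
    · exact hmono ⟨hy0, h.le⟩ ⟨hm₀0.le, le_refl _⟩ h
    · exact hanti ⟨le_refl _, hm₀1.le⟩ ⟨h.le, hy1⟩ h
  -- reflection
  have hrefl : ∀ y : ℝ, phi β B (-y) = phi β B y - 2 * B * y := by
    intro y
    unfold phi
    rw [show (1 + -y) / 2 = (1 - y) / 2 from by ring, show (1 - -y) / 2 = (1 + y) / 2 from by ring]
    ring
  refine ⟨m₀, ⟨by linarith, hm₀1⟩, ?_⟩
  rintro y ⟨hy1, hy2⟩ hne
  rcases le_or_gt 0 y with h0 | h0
  · exact hmax y ⟨h0, hy2⟩ hne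
  · have h1 : phi β B y = phi β B (-y) + 2 * B * y := by
      have := hrefl (-y); simp at this; linarith
    have h2 : phi β B (-y) ≤ phi β B m₀ := by
      rcases eq_or_ne (-y) m₀ with he | he
      · rw [he]
      · exact (hmax (-y) ⟨by linarith, by linarith⟩ he).le
    nlinarith

lemma main (β B : ℝ) (hβ : 0 < β) (hB : B ≠ 0) :
    ∃ m₀ ∈ Set.Ioo (-1 : ℝ) 1,
      ∀ y ∈ Set.Icc (-1 : ℝ) 1, y ≠ m₀ → phi β B y < phi β B m₀ := by
  rcases hB.lt_or_gt with h | h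
  · obtain ⟨m₀, hm, hs⟩ := key β (-B) hβ (by linarith)
    have hsym : ∀ y : ℝ, phi β B y = phi β (-B) (-y) := by
      intro y; unfold phi
      rw [show (1 + -y) / 2 = (1 - y) / 2 from by ring,
        show (1 - -y) / 2 = (1 + y) / 2 from by ring]
      ring
    refine ⟨-m₀, ⟨by linarith [hm.2], by linarith [hm.1]⟩, ?_⟩
    rintro y ⟨hy1, hy2⟩ hne
    rw [hsym y, hsym (-m₀), neg_neg]
    refine hs (-y) ⟨by linarith, by linarith⟩ (fun hc => hne ?_)
    rw [← hc, neg_neg]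
  · exact key β B hβ h


/-- `φ(y) = (β/2) y² + B y - I(y)` has a unique global maximizer over `[-1,1]`,
which lies in `(-1,1)`. -/
theorem stmt17 (β B : ℝ) (hβ : 0 < β) (hB : B ≠ 0) :
    ∃ m₀ ∈ Set.Ioo (-1 : ℝ) 1,
      (∀ y ∈ Set.Icc (-1 : ℝ) 1,
        β / 2 * y ^ 2 + B * y -
            ((1 + y) / 2 * Real.log ((1 + y) / 2) + (1 - y) / 2 * Real.log ((1 - y) / 2)) ≤
          β / 2 * m₀ ^ 2 + B * m₀ -
            ((1 + m₀) / 2 * Real.log ((1 + m₀) / 2) +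
              (1 - m₀) / 2 * Real.log ((1 - m₀) / 2))) ∧
      ∀ y ∈ Set.Icc (-1 : ℝ) 1,
        (β / 2 * y ^ 2 + B * y -
            ((1 + y) / 2 * Real.log ((1 + y) / 2) + (1 - y) / 2 * Real.log ((1 - y) / 2)) =
          β / 2 * m₀ ^ 2 + B * m₀ -
            ((1 + m₀) / 2 * Real.log ((1 + m₀) / 2) +
              (1 - m₀) / 2 * Real.log ((1 - m₀) / 2))) → y = m₀ := by
  obtain ⟨m₀, hm, hs⟩ := main β B hβ hB
  refine ⟨m₀, hm, ?_, ?_⟩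
  · intro y hy
    show phi β B y ≤ phi β B m₀
    rcases eq_or_ne y m₀ with he | he
    · rw [he]
    · exact (hs y hy he).le
  · intro y hy heq
    by_contra hne
    exact (hs y hy hne).ne heq
end
end
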